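/- The plane curve C₃₀ defined by Z³⁰ + F₃₀(X,Y) = 0 is smooth: there is no nonzero vector (x,y,z) ∈ ℂ³ at which all three partial derivatives of the polynomial Z³⁰ + F₃₀(X,Y) vanish simultaneously. -/
import Mathlib

noncomputable section
open MvPolynomial

/-- `G = Z³⁰ + F₃₀(X, Y)` with `X = X 0`, `Y = X 1`, `Z = X 2`. -/
def G30 : MvPolynomial (Fin 3) ℂ :=
  X 2 ^ 30 +
    (X 0 ^ 30 + 522 * (X 0 ^ 25 * X 1 ^ 5 - X 0 ^ 5 * X 1 ^ 25)
      - 10005 * (X 0 ^ 20 * X 1 ^ 10 + X 0 ^ 10 * X 1 ^ 20) + X 1 ^ 30)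

theorem pd522 (i : Fin 3) : pderiv i (522 : MvPolynomial (Fin 3) ℂ) = 0 := by
  rw [← map_ofNat (C : ℂ →+* MvPolynomial (Fin 3) ℂ) 522, pderiv_C]

theorem pd10005 (i : Fin 3) : pderiv i (10005 : MvPolynomial (Fin 3) ℂ) = 0 := by
  rw [← map_ofNat (C : ℂ →+* MvPolynomial (Fin 3) ℂ) 10005, pderiv_C]

theorem stmt3 :
    ¬ ∃ v : Fin 3 → ℂ, v ≠ 0 ∧ ∀ i : Fin 3, eval v (pderiv i G30) = 0 := by
  rintro ⟨v, hv, h⟩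
  have h0 := h 0
  have h1 := h 1
  have h2 := h 2
  simp [G30, Pi.single_apply, pd522, pd10005] at h0 h1 h2
  set x := v 0 with hxd
  set y := v 1 with hyd
  set z := v 2 with hzd
  have hz : z = 0 := h2
  by_cases hx : x = 0
  · have hy : y = 0 := by
      rw [hx] at h1
      have h30 : (30 : ℂ) * y ^ 29 = 0 := by linear_combination h1
      rcases mul_eq_zero.mp h30 with h | h
      · norm_num at h
      · exact pow_eq_zero_iff (by norm_num) |>.mp h
    apply hv
    funext i
    fin_cases i
    · exact hx
    · exact hy
    · exact hz
  · set t := y / x with htd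
    have ht : y = t * x := by
      rw [htd, div_mul_cancel₀ _ hx]
    rw [ht] at h0 h1
    have key : x ^ 29 = 0 := by
      linear_combination
        ((1/30 : ℂ) + (-21763020101/19531250000 : ℂ) * t^5
          + (2986915639/351562500000 : ℂ) * t^10
          + (-2350285336231/1054687500000 : ℂ) * t^15
          + (-17035429603/117187500000 : ℂ) * t^20
          + (352454081/1054687500000 : ℂ) * t^25) * h0 +
        ((-3005058677/19531250000 : ℂ) * t
          + (2350753468789/1054687500000 : ℂ) * t^6
          + (-497319463/117187500000 : ℂ) * t^11
          + (1175317676431/1054687500000 : ℂ) * t^16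
          + (10221168349/351562500000 : ℂ) * t^21) * h1
    exact hx (pow_eq_zero_iff (by norm_num) |>.mp key)
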